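/- Assume E(X_0^β) < ∞. Then Σ_{j=1}^∞ b^j Y_j = +∞ almost surely. -/

import Mathlib

open MeasureTheory Set
open scoped ENNReal

/-- The Beta distribution `Beta(a, c)` on `(0, 1)`. -/
noncomputable def betaMeas (a c : ℝ) : Measure ℝ :=
  (volume : Measure ℝ).withDensity fun x =>
    ENNReal.ofReal
      (if 0 < x ∧ x < 1 then
        Real.Gamma (a + c) / (Real.Gamma a * Real.Gamma c) * x ^ (a - 1) * (1 - x) ^ (c - 1)
      else 0)

/-- The Gamma distribution `Γ(lam, r)` on `(0, ∞)` with rate `lam` and shape `r`. -/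
noncomputable def gammaMeas (lam r : ℝ) : Measure ℝ :=
  (volume : Measure ℝ).withDensity fun x =>
    ENNReal.ofReal
      (if 0 < x then lam ^ r * x ^ (r - 1) * Real.exp (-(lam * x)) / Real.Gamma r else 0)

lemma betaMeas_compl_Ioo (a c : ℝ) : betaMeas a c (Ioo 0 1)ᶜ = 0 := by
  rw [betaMeas, withDensity_apply _ measurableSet_Ioo.compl]
  rw [setLIntegral_congr_fun measurableSet_Ioo.compl
    (fun x hx => ?_), lintegral_zero]
  simp only [mem_compl_iff, mem_Ioo] at hx
  simp [if_neg hx]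

lemma gammaMeas_compl_Ioi (lam r : ℝ) : gammaMeas lam r (Ioi 0)ᶜ = 0 := by
  rw [gammaMeas, withDensity_apply _ measurableSet_Ioi.compl]
  rw [setLIntegral_congr_fun measurableSet_Ioi.compl
    (fun x hx => ?_), lintegral_zero]
  simp only [mem_compl_iff, mem_Ioi, not_lt] at hx
  simp [not_lt.2 hx]

lemma gammaMeas_Ici_ne_zero (β : ℝ) (hβ : 0 < β) : gammaMeas 1 β (Ici 1) ≠ 0 := by
  intro h0
  rw [gammaMeas, withDensity_apply _ measurableSet_Ici] at h0
  have hmeas : Measurable fun x : ℝ => ENNReal.ofReal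
      (if 0 < x then (1:ℝ) ^ β * x ^ (β - 1) * Real.exp (-(1 * x)) / Real.Gamma β else 0) := by
    apply Measurable.ennreal_ofReal
    apply Measurable.ite measurableSet_Ioi _ measurable_const
    fun_prop
  rw [lintegral_eq_zero_iff hmeas] at h0
  rw [Filter.EventuallyEq, ae_restrict_iff' measurableSet_Ici, ae_iff] at h0
  have hsub : Ici (1:ℝ) ⊆ {a : ℝ | ¬ (a ∈ Ici (1:ℝ) → ENNReal.ofReal
      (if 0 < a then (1:ℝ) ^ β * a ^ (β - 1) * Real.exp (-(1 * a)) / Real.Gamma β else 0)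
        = (0 : ℝ → ℝ≥0∞) a)} := by
    intro x hx
    simp only [mem_setOf_eq, _root_.not_imp, Pi.zero_apply]
    refine ⟨hx, ?_⟩
    have hx0 : (0:ℝ) < x := lt_of_lt_of_le one_pos hx
    rw [if_pos hx0]
    have hpos : 0 < (1:ℝ) ^ β * x ^ (β - 1) * Real.exp (-(1 * x)) / Real.Gamma β := by
      apply div_pos
      · positivity
      · exact Real.Gamma_pos_of_pos hβ
    simp only [ne_eq, ENNReal.ofReal_eq_zero, not_le]
    exact hpos
  have hle := measure_mono (μ := (volume : Measure ℝ)) hsub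
  rw [h0, Real.volume_Ici] at hle
  simp at hle

/-- Lemma 2 (consequence): if `E(X₀^β) < ∞` then `∑_{j=1}^∞ b^j Y_j = +∞`
almost surely. -/
theorem sum_obs_diverges
    {Ω : Type*} [MeasurableSpace Ω] (P : Measure Ω) [IsProbabilityMeasure P]
    (α β b : ℝ) (hα : 0 < α) (hβ : 0 < β) (hb : 0 < b)
    (W G : ℕ → Ω → ℝ) (X0 : Ω → ℝ) (X Y : ℕ → Ω → ℝ)
    (hWm : ∀ n, Measurable (W n)) (hGm : ∀ n, Measurable (G n)) (hX0m : Measurable X0)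
    (hW : ∀ n, Measure.map (W n) P = betaMeas α β)
    (hG : ∀ n, Measure.map (G n) P = gammaMeas 1 β)
    (hindep : ProbabilityTheory.iIndepFun
      (Sum.elim W (Sum.elim G fun _ : Unit => X0)) P)
    (hX0pos : ∀ ω, 0 < X0 ω)
    (hX0 : X 0 = X0) (hXrec : ∀ n ω, X (n + 1) ω = b * X n ω * W n ω)
    (hY : ∀ n ω, Y (n + 1) ω = G n ω / X (n + 1) ω)
    (hX0int : Integrable (fun ω => X0 ω ^ β) P)
    :
    ∀ᵐ ω ∂P, Filter.Tendsto (fun n => ∑ j ∈ Finset.Icc 1 n, b ^ j * Y j ω)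
      Filter.atTop Filter.atTop := by
  classical
  set A : ℕ → Set Ω := fun n => G n ⁻¹' Ici 1 with hA
  have hAm : ∀ n, MeasurableSet (A n) := fun n => (hGm n) measurableSet_Ici
  have hAP : ∀ n, P (A n) = gammaMeas 1 β (Ici 1) := by
    intro n
    rw [hA]
    rw [← Measure.map_apply (hGm n) measurableSet_Ici, hG n]
  -- the events `A n` are independent
  have hindepA : ProbabilityTheory.iIndepSet A P := by
    rw [ProbabilityTheory.iIndepSet_iff_meas_biInter hAm]
    intro s
    let e : ℕ ↪ ℕ ⊕ (ℕ ⊕ Unit) :=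
      ⟨fun n => Sum.inr (Sum.inl n), fun a b h => by simpa using h⟩
    have h := hindep.meas_biInter (S := s.map e)
      (s := fun i => Sum.elim W (Sum.elim G fun _ : Unit => X0) i ⁻¹' Ici 1)
      (fun i _ => ⟨Ici 1, measurableSet_Ici, rfl⟩)
    have h1 : (⋂ i ∈ s.map e, Sum.elim W (Sum.elim G fun _ : Unit => X0) i ⁻¹' Ici 1)
        = ⋂ n ∈ s, A n := by
      ext ω
      simp only [Finset.mem_map, mem_iInter]
      constructor
      · intro h n hn; exact h (e n) ⟨n, hn, rfl⟩
      · rintro h i ⟨n, hn, rfl⟩; exact h n hn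
    rw [h1, Finset.prod_map] at h
    exact h
  -- second Borel–Cantelli
  have hBC : P (Filter.limsup A Filter.atTop) = 1 := by
    refine ProbabilityTheory.measure_limsup_eq_one hAm hindepA ?_
    simp only [hAP]
    exact ENNReal.tsum_const_eq_top_of_ne_zero (gammaMeas_Ici_ne_zero β hβ)
  have hlimsup_ae : ∀ᵐ ω ∂P, ω ∈ Filter.limsup A Filter.atTop :=
    (mem_ae_iff_prob_eq_one (MeasurableSet.measurableSet_limsup hAm)).mpr hBC
  -- W lies a.s. in (0,1)
  have hWae : ∀ᵐ ω ∂P, ∀ n, W n ω ∈ Ioo (0:ℝ) 1 := by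
    rw [ae_all_iff]
    intro n
    have h0 : P (W n ⁻¹' (Ioo (0:ℝ) 1)ᶜ) = 0 := by
      rw [← Measure.map_apply (hWm n) measurableSet_Ioo.compl, hW n]
      exact betaMeas_compl_Ioo α β
    exact ae_iff.mpr h0
  -- G is a.s. positive
  have hGae : ∀ᵐ ω ∂P, ∀ n, G n ω ∈ Ioi (0:ℝ) := by
    rw [ae_all_iff]
    intro n
    have h0 : P (G n ⁻¹' (Ioi (0:ℝ))ᶜ) = 0 := by
      rw [← Measure.map_apply (hGm n) measurableSet_Ioi.compl, hG n]
      exact gammaMeas_compl_Ioi 1 β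
    exact ae_iff.mpr h0
  filter_upwards [hWae, hGae, hlimsup_ae] with ω hWω hGω hlim
  -- pointwise argument
  have hXpos : ∀ n, 0 < X n ω ∧ X n ω ≤ b ^ n * X0 ω := by
    intro n
    induction n with
    | zero => rw [hX0]; exact ⟨hX0pos ω, by simp⟩
    | succ n ih =>
      rw [hXrec n ω]
      obtain ⟨hp, hle⟩ := ih
      obtain ⟨hw0, hw1⟩ := hWω n
      constructor
      · exact mul_pos (mul_pos hb hp) hw0
      · calc b * X n ω * W n ω ≤ b * X n ω * 1 := by
              exact mul_le_mul_of_nonneg_left hw1.le (by positivity)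
          _ = b * X n ω := mul_one _
          _ ≤ b * (b ^ n * X0 ω) := mul_le_mul_of_nonneg_left hle hb.le
          _ = b ^ (n + 1) * X0 ω := by ring
  have hX0' : 0 < X0 ω := hX0pos ω
  have hterm_nonneg : ∀ k : ℕ, 0 ≤ b ^ (k + 1) * Y (k + 1) ω := by
    intro k
    rw [hY k ω]
    have h1 := (hXpos (k + 1)).1
    have h2 := (mem_Ioi.mp (hGω k)).le
    positivity
  have hterm_ge : ∀ k : ℕ, 1 ≤ G k ω → 1 / X0 ω ≤ b ^ (k + 1) * Y (k + 1) ω := by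
    intro k hk
    obtain ⟨hp, hle⟩ := hXpos (k + 1)
    have hbpow : (0:ℝ) < b ^ (k + 1) := pow_pos hb _
    rw [hY k ω, mul_div_assoc']
    rw [div_le_div_iff₀ hX0' hp]
    nlinarith [mul_le_mul_of_nonneg_left hk (mul_pos hbpow hX0').le]
  set S : ℕ → ℝ := fun n => ∑ j ∈ Finset.Icc 1 n, b ^ j * Y j ω with hS
  have hstep : ∀ n, S (n + 1) = S n + b ^ (n + 1) * Y (n + 1) ω := by
    intro n
    rw [hS]
    exact Finset.sum_Icc_succ_top (Nat.succ_le_succ (Nat.zero_le n)) _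
  have hmono : Monotone S :=
    monotone_nat_of_le_succ (fun n => by rw [hstep n]; linarith [hterm_nonneg n])
  have hfreq : ∀ N : ℕ, ∃ m, N ≤ m ∧ 1 ≤ G m ω := by
    have hf := Filter.mem_limsup_iff_frequently_mem.mp hlim
    intro N
    obtain ⟨m, hm, hmem⟩ := (Filter.frequently_atTop.mp hf) N
    exact ⟨m, hm, hmem⟩
  have hgrow : ∀ k : ℕ, ∃ N, (k : ℝ) * (1 / X0 ω) ≤ S N := by
    intro k
    induction k with
    | zero =>
      refine ⟨0, ?_⟩
      have hS0 : S 0 = 0 := by simp [hS]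
      simp [hS0]
    | succ k ih =>
      obtain ⟨N, hN⟩ := ih
      obtain ⟨m, hm, hGm1⟩ := hfreq N
      refine ⟨m + 1, ?_⟩
      have h1 : S N ≤ S m := hmono hm
      have h2 := hterm_ge m hGm1
      rw [hstep m]
      push_cast
      linarith
  have hunbdd : ∀ M : ℝ, ∃ N, M ≤ S N := by
    intro M
    have hc : (0:ℝ) < 1 / X0 ω := by positivity
    obtain ⟨k, hk⟩ := exists_nat_ge (M / (1 / X0 ω))
    obtain ⟨N, hN⟩ := hgrow k
    exact ⟨N, le_trans ((div_le_iff₀ hc).mp hk) hN⟩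
  exact hmono.tendsto_atTop_atTop hunbdd
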